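/- The translation τ from MLSR into first-order logic is truth-preserving: for every MLSR formula φ, pointed model (M, s), finite set of points D = {d₁, ..., d_k} of M not containing s, and set of variables X = {x₁, ..., x_k}, we have M - D, s ⊨ φ if and only if M ⊨ τ(φ, y, X) under the assignment sending y to s and xᵢ to dᵢ. In particular, with D = ∅, M, s ⊨ φ iff M ⊨ τ(φ, y, ∅)[y ↦ s]. -/
import Mathlib


/-- MLSR syntax: atoms, ⊤, ¬, ∨, ◇, and the removal modality ⟨-φ⟩ψ. -/
inductive Form : Type where
  | atom : ℕ → Form
  | top : Form
  | neg : Form → Form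
  | or : Form → Form → Form
  | dia : Form → Form
  | rem : Form → Form → Form

/-- A relational model. -/
structure Model (W : Type) where
  R : W → W → Prop
  V : ℕ → W → Prop

/-- Truth relative to a current domain `D ⊆ W` (submodel semantics);
`M - {t}` is represented by shrinking the domain to `D \ {t}`. -/
def Sat {W : Type} (M : Model W) : Form → Set W → W → Prop
  | .atom p, _, s => M.V p s
  | .top, _, _ => True
  | .neg φ, D, s => ¬ Sat M φ D s
  | .or φ ψ, D, s => Sat M φ D s ∨ Sat M ψ D s
  | .dia φ, D, s => ∃ t ∈ D, M.R s t ∧ Sat M φ D t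
  | .rem φ ψ, D, s => ∃ t ∈ D, t ≠ s ∧ Sat M φ D t ∧ Sat M ψ (D \ {t}) s

/-- First-order syntax over the modal signature: unary predicates `P p`,
a binary relation `Rel`, equality, Booleans, and ∃ over named variables. -/
inductive FO : Type where
  | P : ℕ → ℕ → FO
  | Rel : ℕ → ℕ → FO
  | eq : ℕ → ℕ → FO
  | neg : FO → FO
  | or : FO → FO → FO
  | and : FO → FO → FO
  | ex : ℕ → FO → FO

/-- First-order satisfaction in the model `M` under assignment `a`. -/
def FOSat {W : Type} (M : Model W) : (ℕ → W) → FO → Prop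
  | a, .P p v => M.V p (a v)
  | a, .Rel v w => M.R (a v) (a w)
  | a, .eq v w => a v = a w
  | a, .neg φ => ¬ FOSat M a φ
  | a, .or φ ψ => FOSat M a φ ∨ FOSat M a ψ
  | a, .and φ ψ => FOSat M a φ ∧ FOSat M a ψ
  | a, .ex v φ => ∃ w : W, FOSat M (Function.update a v w) φ

/-- A variable fresh for the finite set `X`. -/
def fresh (X : Finset ℕ) : ℕ := X.sup id + 1

/-- ⋀_{x ∈ X} ¬(z = x). -/
noncomputable def noneOf (z : ℕ) (X : Finset ℕ) : FO :=
  X.toList.foldr (fun x acc => .and (.neg (.eq z x)) acc) (.eq 0 0)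

/-- The compositional translation τ(φ, y, X) of MLSR into first-order logic;
`X` is the memory of variables standing for already-deleted points. -/
noncomputable def tau : Form → ℕ → Finset ℕ → FO
  | .atom p, y, _ => .P p y
  | .top, y, _ => .eq y y
  | .neg φ, y, X => .neg (tau φ y X)
  | .or φ ψ, y, X => .or (tau φ y X) (tau ψ y X)
  | .dia φ, y, X =>
      let z := fresh (insert y X)
      .ex z (.and (.Rel y z) (.and (noneOf z X) (tau φ z X)))
  | .rem φ ψ, y, X =>
      let z := fresh (insert y X)
      .ex z (.and (.neg (.eq z y))
        (.and (noneOf z X) (.and (tau φ z X) (tau ψ y (insert z X)))))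

/-- τ is truth-preserving: for a set of variables `X` naming (injectively, via
the assignment `a`) a finite set `D = a '' X` of deleted points not containing
`s = a y`, we have `M - D, s ⊨ φ` iff `M, a ⊨ τ(φ, y, X)`.
The case `X = ∅` gives `M, s ⊨ φ ↔ M ⊨ τ(φ, y, ∅)[y ↦ s]`. -/

lemma lt_fresh {X : Finset ℕ} {x : ℕ} (hx : x ∈ X) : x < fresh X := by
  have := Finset.le_sup (f := id) hx
  simpa [fresh] using Nat.lt_succ_of_le this

lemma fresh_not_mem (X : Finset ℕ) : fresh X ∉ X := fun h => lt_irrefl _ (lt_fresh h)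

lemma noneOf_sat {W : Type} (M : Model W) (a : ℕ → W) (z : ℕ) (X : Finset ℕ) :
    FOSat M a (noneOf z X) ↔ ∀ x ∈ X, a z ≠ a x := by
  have key : ∀ l : List ℕ,
      FOSat M a (l.foldr (fun x acc => .and (.neg (.eq z x)) acc) (.eq 0 0)) ↔
        ∀ x ∈ l, a z ≠ a x := by
    intro l; induction l with
    | nil => simp [FOSat]
    | cons b t ih => simp [FOSat, ih]
  rw [noneOf, key]
  simp

theorem stmt6 {W : Type} (M : Model W) (φ : Form) (y : ℕ) (X : Finset ℕ)
    (a : ℕ → W) (hy : y ∉ X) (hinj : Set.InjOn a ↑X) (hs : a y ∉ a '' ↑X) :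
    Sat M φ (Set.univ \ a '' ↑X) (a y) ↔ FOSat M a (tau φ y X) := by
  induction φ generalizing y X a with
  | atom p => simp [Sat, tau, FOSat]
  | top => simp [Sat, tau, FOSat]
  | neg φ ih => simp [Sat, tau, FOSat, ih y X a hy hinj hs]
  | or φ ψ ih1 ih2 =>
      simp [Sat, tau, FOSat, ih1 y X a hy hinj hs, ih2 y X a hy hinj hs]
  | dia φ ih =>
    have hzy : fresh (insert y X) ≠ y := by
      intro h
      apply fresh_not_mem (insert y X)
      rw [h]; exact Finset.mem_insert_self y X
    have hzX : fresh (insert y X) ∉ X := fun h =>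
      fresh_not_mem (insert y X) (Finset.mem_insert_of_mem h)
    set z := fresh (insert y X) with hzdef
    have heqgen : ∀ t : W, ∀ x ∈ (X : Set ℕ), Function.update a z t x = a x := by
      intro t x hx
      exact Function.update_of_ne (by rintro rfl; exact hzX hx) _ _
    have himggen : ∀ t : W, Function.update a z t '' ↑X = a '' ↑X := fun t =>
      Set.image_congr (heqgen t)
    have hinjgen : ∀ t : W, Set.InjOn (Function.update a z t) ↑X := fun t x1 h1 x2 h2 h =>
      hinj h1 h2 (by rwa [heqgen t x1 h1, heqgen t x2 h2] at h)
    simp only [Sat, tau, FOSat, ← hzdef]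
    constructor
    · rintro ⟨t, ht, hr, hsat⟩
      refine ⟨t, ?_, ?_, ?_⟩
      · simpa [Function.update_of_ne hzy.symm] using hr
      · rw [noneOf_sat]
        intro x hx
        rw [Function.update_self, heqgen t x hx]
        exact fun h => ht.2 ⟨x, hx, h.symm⟩
      · apply (ih z X (Function.update a z t) hzX (hinjgen t)
          (by rw [himggen t, Function.update_self]; exact fun h => ht.2 h)).mp
        rw [himggen t, Function.update_self]
        exact hsat
    · rintro ⟨t, hr, hnone, hsat⟩
      rw [noneOf_sat] at hnone
      have htX : t ∉ a '' ↑X := by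
        rintro ⟨x, hx, rfl⟩
        exact hnone x hx (by rw [Function.update_self, heqgen _ x hx])
      refine ⟨t, ⟨trivial, htX⟩, ?_, ?_⟩
      · simpa [Function.update_of_ne hzy.symm] using hr
      · have := (ih z X (Function.update a z t) hzX (hinjgen t)
          (by rw [himggen t, Function.update_self]; exact htX)).mpr hsat
        rwa [himggen t, Function.update_self] at this
  | rem φ ψ ih1 ih2 =>
    have hzy : fresh (insert y X) ≠ y := by
      intro h
      apply fresh_not_mem (insert y X)
      rw [h]; exact Finset.mem_insert_self y X
    have hzX : fresh (insert y X) ∉ X := fun h =>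
      fresh_not_mem (insert y X) (Finset.mem_insert_of_mem h)
    set z := fresh (insert y X) with hzdef
    have heqgen : ∀ t : W, ∀ x ∈ (X : Set ℕ), Function.update a z t x = a x := by
      intro t x hx
      exact Function.update_of_ne (by rintro rfl; exact hzX hx) _ _
    have himggen : ∀ t : W, Function.update a z t '' ↑X = a '' ↑X := fun t =>
      Set.image_congr (heqgen t)
    have hinjgen : ∀ t : W, Set.InjOn (Function.update a z t) ↑X := fun t x1 h1 x2 h2 h =>
      hinj h1 h2 (by rwa [heqgen t x1 h1, heqgen t x2 h2] at h)
    have hdom : ∀ t : W, Function.update a z t '' ↑(insert z X) = insert t (a '' ↑X) := by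
      intro t
      rw [Finset.coe_insert, Set.image_insert_eq, Function.update_self, himggen t]
    have hddiff : ∀ t : W, (Set.univ \ a '' ↑X) \ {t} = Set.univ \ insert t (a '' ↑X) := by
      intro t; ext w; simp; tauto
    have hyzX : y ∉ insert z X := by
      rw [Finset.mem_insert]
      push_neg
      exact ⟨fun h => hzy h.symm, hy⟩
    have hinj2 : ∀ t : W, t ∉ a '' ↑X →
        Set.InjOn (Function.update a z t) ↑(insert z X) := by
      intro t htX
      rw [Finset.coe_insert]
      intro x1 h1 x2 h2 h
      rcases h1 with rfl | h1 <;> rcases h2 with rfl | h2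
      · rfl
      · rw [Function.update_self, heqgen t x2 h2] at h
        exact (htX ⟨x2, h2, h.symm⟩).elim
      · rw [Function.update_self, heqgen t x1 h1] at h
        exact (htX ⟨x1, h1, h⟩).elim
      · exact hinjgen t h1 h2 h
    have hs2 : ∀ t : W, t ∉ a '' ↑X → t ≠ a y →
        Function.update a z t y ∉ Function.update a z t '' ↑(insert z X) := by
      intro t htX hts
      rw [hdom t, Function.update_of_ne hzy.symm]
      simp only [Set.mem_insert_iff]
      push_neg
      exact ⟨fun h => hts h.symm, hs⟩
    simp only [Sat, tau, FOSat, ← hzdef]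
    constructor
    · rintro ⟨t, ht, hts, hsφ, hsψ⟩
      refine ⟨t, ?_, ?_, ?_, ?_⟩
      · rw [Function.update_self, Function.update_of_ne hzy.symm]; exact hts
      · rw [noneOf_sat]
        intro x hx
        rw [Function.update_self, heqgen t x hx]
        exact fun h => ht.2 ⟨x, hx, h.symm⟩
      · apply (ih1 z X (Function.update a z t) hzX (hinjgen t)
          (by rw [himggen t, Function.update_self]; exact fun h => ht.2 h)).mp
        rw [himggen t, Function.update_self]
        exact hsφ
      · apply (ih2 y (insert z X) (Function.update a z t) hyzX
          (hinj2 t (fun h => ht.2 h)) (hs2 t (fun h => ht.2 h) hts)).mp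
        rw [hdom t, Function.update_of_ne hzy.symm, ← hddiff t]
        exact hsψ
    · rintro ⟨t, htney, hnone, hsφ, hsψ⟩
      rw [noneOf_sat] at hnone
      rw [Function.update_self, Function.update_of_ne hzy.symm] at htney
      have htX : t ∉ a '' ↑X := by
        rintro ⟨x, hx, rfl⟩
        exact hnone x hx (by rw [Function.update_self, heqgen _ x hx])
      refine ⟨t, ⟨trivial, htX⟩, htney, ?_, ?_⟩
      · have := (ih1 z X (Function.update a z t) hzX (hinjgen t)
          (by rw [himggen t, Function.update_self]; exact htX)).mpr hsφ
        rwa [himggen t, Function.update_self] at this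
      · have := (ih2 y (insert z X) (Function.update a z t) hyzX
          (hinj2 t htX) (hs2 t htX htney)).mpr hsψ
        rw [hdom t, Function.update_of_ne hzy.symm, ← hddiff t] at this
        exact this
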